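/- Let p be a prime and let A be a sequence over (Z/pZ)² containing the four elements (0,0), (1,0), (0,1), (s,t) each with multiplicity at least ⌊δp⌋, where δ > 0 is fixed. Suppose for a parameter N with 1 ≤ N ≤ δp/3 the exponential sum bound Σ_{α ≠ (0,0)} Z(α·(1,0))·Z(α·(0,1))·Z(α·(s,t)) ≤ (N+1)³/2 holds, where Z(u) = min(N+1, 2/|1 - e^{2πiu/p}|) for u ∈ Z/pZ, u ≠ 0, and Z(0) = N+1. Then every element of (Z/pZ)² can be written as Σ_{1≤i<j≤4} ν_{ij}(x_i - x_j) with integers 0 ≤ ν_{ij} ≤ N, where x₁ = (0,0), x₂ = (1,0), x₃ = (0,1), x₄ = (s,t). -/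

import Mathlib

noncomputable section

/-- The quantity Z(u) = min(N+1, 2/|1 - e^{2πiu/p}|), with Z(0) = N+1. -/
def Zf (p N : ℕ) (u : ZMod p) : ℝ :=
  if u = 0 then (N : ℝ) + 1
  else min ((N : ℝ) + 1)
    (2 / ‖1 - Complex.exp (2 * Real.pi * Complex.I * (u.val : ℂ) / (p : ℂ))‖)

namespace Stmt15Aux

open Finset Complex

variable {p : ℕ} [NeZero p]

lemma eta_apply (u : ZMod p) :
    ZMod.stdAddChar u = Complex.exp (2 * Real.pi * Complex.I * (u.val : ℂ) / (p : ℂ)) := by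
  rw [ZMod.stdAddChar_apply, ZMod.toCircle_apply]

lemma abs_eta (u : ZMod p) : ‖ZMod.stdAddChar u‖ = 1 := by
  rw [ZMod.stdAddChar_apply]; exact Circle.norm_coe _

lemma eta_eq_one_iff (u : ZMod p) : ZMod.stdAddChar u = 1 ↔ u = 0 := by
  constructor
  · intro h
    have := ZMod.injective_stdAddChar (N := p)
    have h0 : ZMod.stdAddChar (0 : ZMod p) = 1 := AddChar.map_zero_eq_one _
    exact this (h.trans h0.symm)
  · intro h; simp [h]

/-- geometric character sum -/
def G (p N : ℕ) [NeZero p] (u : ZMod p) : ℂ :=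
  ∑ j ∈ Finset.range (N + 1), (ZMod.stdAddChar u) ^ j

lemma G_zero (N : ℕ) : G p N (0 : ZMod p) = (N : ℂ) + 1 := by
  simp [G, AddChar.map_zero_eq_one]

lemma abs_G_le (N : ℕ) (u : ZMod p) : ‖G p N u‖ ≤ (N : ℝ) + 1 := by
  refine le_trans (norm_sum_le _ _) ?_
  have : ∀ j ∈ Finset.range (N + 1), ‖(ZMod.stdAddChar u) ^ j‖ = 1 := by
    intro j _; rw [norm_pow, abs_eta, one_pow]
  rw [Finset.sum_congr rfl this]
  simp

lemma Zf_nonneg (N : ℕ) (u : ZMod p) : 0 ≤ Zf p N u := by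
  unfold Zf
  split_ifs
  · positivity
  · refine le_min (by positivity) (by positivity)

lemma abs_G_le_Zf (N : ℕ) (u : ZMod p) : ‖G p N u‖ ≤ Zf p N u := by
  by_cases hu : u = 0
  · subst hu; rw [G_zero, Zf, if_pos rfl]
    rw [show ((N:ℂ)+1) = (((N:ℝ)+1 : ℝ) : ℂ) by push_cast; ring, Complex.norm_real, Real.norm_eq_abs,
      _root_.abs_of_nonneg (by positivity)]
  · rw [Zf, if_neg hu]
    refine le_min (abs_G_le N u) ?_
    have hx : ZMod.stdAddChar u ≠ 1 := fun h => hu ((eta_eq_one_iff u).mp h)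
    have hgeom : G p N u = ((ZMod.stdAddChar u) ^ (N + 1) - 1) / (ZMod.stdAddChar u - 1) :=
      geom_sum_eq hx (N + 1)
    rw [hgeom, norm_div]
    have h1 : ‖(ZMod.stdAddChar u) ^ (N + 1) - 1‖ ≤ 2 := by
      refine le_trans (norm_sub_le _ _) ?_
      rw [norm_pow, abs_eta, one_pow, norm_one]; norm_num
    have h2 : ‖ZMod.stdAddChar u - 1‖
        = ‖1 - Complex.exp (2 * Real.pi * Complex.I * (u.val : ℂ) / (p : ℂ))‖ := by
      rw [← eta_apply, ← norm_neg, neg_sub]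
    have hx' : (1 : ℂ) - Complex.exp (2 * Real.pi * Complex.I * (u.val : ℂ) / (p : ℂ)) ≠ 0 := by
      rw [← eta_apply]; exact sub_ne_zero.mpr (Ne.symm hx)
    have hpos := norm_pos_iff.mpr hx'
    rw [h2]
    gcongr


lemma Zf_eta (N : ℕ) (u : ZMod p) (hu : u ≠ 0) :
    Zf p N u = min ((N : ℝ) + 1) (2 / ‖1 - ZMod.stdAddChar u‖) := by
  rw [Zf, if_neg hu, eta_apply]

lemma Zf_neg (N : ℕ) (u : ZMod p) : Zf p N (-u) = Zf p N u := by
  by_cases hu : u = 0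
  · simp [hu]
  · have hnu : -u ≠ 0 := by simpa using hu
    rw [Zf_eta N u hu, Zf_eta N (-u) hnu]
    congr 2
    rw [AddChar.map_neg_eq_inv]
    have h1 : ‖ZMod.stdAddChar u‖ = 1 := abs_eta u
    have hne : ZMod.stdAddChar u ≠ 0 := by
      intro h; rw [h] at h1; simp at h1
    have he : (1 : ℂ) - (ZMod.stdAddChar u)⁻¹
        = (ZMod.stdAddChar u)⁻¹ * (ZMod.stdAddChar u - 1) := by
      field_simp
    rw [he, norm_mul, norm_inv, h1, inv_one, one_mul,
      ← norm_neg, neg_sub]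

lemma abs_G_neg_le_Zf (N : ℕ) (u : ZMod p) : ‖G p N (-u)‖ ≤ Zf p N u := by
  rw [← Zf_neg N u]; exact abs_G_le_Zf N (-u)

lemma orth1 [Fact (Nat.Prime p)] (v : ZMod p) :
    ∑ a : ZMod p, ZMod.stdAddChar (a * v) = if v = 0 then (p : ℂ) else 0 := by
  have := AddChar.sum_mulShift v (ZMod.isPrimitive_stdAddChar p)
  simpa [ZMod.card] using this

lemma orth2 [Fact (Nat.Prime p)] (v : ZMod p × ZMod p) :
    ∑ α : ZMod p × ZMod p, ZMod.stdAddChar (α.1 * v.1 + α.2 * v.2)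
      = if v = 0 then ((p : ℂ)) ^ 2 else 0 := by
  rw [Fintype.sum_prod_type]
  have : ∀ a : ZMod p, ∑ b : ZMod p, ZMod.stdAddChar (a * v.1 + b * v.2)
      = ZMod.stdAddChar (a * v.1) * ∑ b : ZMod p, ZMod.stdAddChar (b * v.2) := by
    intro a
    rw [Finset.mul_sum]
    exact Finset.sum_congr rfl fun b _ => AddChar.map_add_eq_mul _ _ _
  rw [Finset.sum_congr rfl fun a _ => this a, ← Finset.sum_mul, orth1, orth1]
  rcases eq_or_ne v.1 0 with h1 | h1 <;> rcases eq_or_ne v.2 0 with h2 | h2 <;>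
    simp [h1, h2, Prod.ext_iff, sq]


lemma addChar_map_sum {A : Type*} [AddCommMonoid A] {ι : Type*} (ψ : AddChar A ℂ)
    (s : Finset ι) (f : ι → A) :
    ψ (∑ i ∈ s, f i) = ∏ i ∈ s, ψ (f i) := by
  induction s using Finset.cons_induction with
  | empty => simp
  | cons a s h ih => rw [Finset.sum_cons, Finset.prod_cons, AddChar.map_add_eq_mul, ih]

/-- The six difference vectors. -/
def D {p : ℕ} (s t : ZMod p) : Fin 6 → ZMod p × ZMod p :=
  ![(-1, 0), (0, -1), (-s, -t), (1, -1), (1 - s, -t), (-s, 1 - t)]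

/-- The bilinear pairing as an `AddMonoidHom` in the second variable. -/
def Bl {p : ℕ} (α : ZMod p × ZMod p) : (ZMod p × ZMod p) →+ ZMod p where
  toFun v := α.1 * v.1 + α.2 * v.2
  map_zero' := by simp
  map_add' x y := by simp [Prod.fst_add, Prod.snd_add]; ring

lemma key (p : ℕ) [hp : Fact (Nat.Prime p)] (N : ℕ) (s t : ZMod p)
    (hexp : (∑ α ∈ (Finset.univ : Finset (ZMod p × ZMod p)) \ {(0, 0)},
        Zf p N α.1 * Zf p N α.2 * Zf p N (α.1 * s + α.2 * t)) ≤ ((N : ℝ) + 1) ^ 3 / 2)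
    (z : ZMod p × ZMod p) :
    ∃ ν : Fin 6 → Fin (N + 1), ∑ k, (ν k : ℕ) • D s t k = z := by
  haveI : NeZero p := ⟨hp.out.ne_zero⟩
  classical
  set F : (Fin 6 → Fin (N + 1)) → ZMod p × ZMod p := fun ν => ∑ k, (ν k : ℕ) • D s t k with hF
  -- the Fourier identity
  have hA : ((Finset.univ.filter (fun ν : Fin 6 → Fin (N + 1) => F ν = z)).card : ℂ) * (p : ℂ) ^ 2
      = ∑ α : ZMod p × ZMod p,
          (∏ k : Fin 6, G p N (Bl α (D s t k))) * ZMod.stdAddChar (-(Bl α z)) := by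
    have step1 : ∀ ν : Fin 6 → Fin (N + 1),
        ∑ α : ZMod p × ZMod p, ZMod.stdAddChar (Bl α (F ν - z))
          = if F ν = z then ((p : ℂ)) ^ 2 else 0 := by
      intro ν
      have := orth2 (p := p) (F ν - z)
      simp only [Bl, AddMonoidHom.coe_mk, ZeroHom.coe_mk] at this ⊢
      rw [this]
      simp [sub_eq_zero]
    calc ((Finset.univ.filter (fun ν : Fin 6 → Fin (N + 1) => F ν = z)).card : ℂ) * (p : ℂ) ^ 2
        = ∑ ν : Fin 6 → Fin (N + 1), if F ν = z then ((p : ℂ)) ^ 2 else 0 := by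
          rw [Finset.sum_ite, Finset.sum_const, Finset.sum_const_zero, add_zero,
            nsmul_eq_mul]
      _ = ∑ ν : Fin 6 → Fin (N + 1), ∑ α : ZMod p × ZMod p, ZMod.stdAddChar (Bl α (F ν - z)) := by
          exact (Finset.sum_congr rfl fun ν _ => (step1 ν).symm)
      _ = ∑ α : ZMod p × ZMod p, ∑ ν : Fin 6 → Fin (N + 1), ZMod.stdAddChar (Bl α (F ν - z)) :=
          Finset.sum_comm
      _ = ∑ α : ZMod p × ZMod p,
          (∏ k : Fin 6, G p N (Bl α (D s t k))) * ZMod.stdAddChar (-(Bl α z)) := by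
          refine Finset.sum_congr rfl fun α _ => ?_
          have hsplit : ∀ ν : Fin 6 → Fin (N + 1), ZMod.stdAddChar (Bl α (F ν - z))
              = (∏ k : Fin 6, (ZMod.stdAddChar (Bl α (D s t k))) ^ ((ν k : ℕ)))
                * ZMod.stdAddChar (-(Bl α z)) := by
            intro ν
            have h1 : Bl α (F ν - z) = (∑ k, (ν k : ℕ) • Bl α (D s t k)) + (-(Bl α z)) := by
              rw [map_sub, sub_eq_add_neg, hF]
              simp only [map_sum, AddMonoidHom.map_nsmul]
            rw [h1, AddChar.map_add_eq_mul]
            congr 1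
            rw [addChar_map_sum]
            exact Finset.prod_congr rfl fun k _ => AddChar.map_nsmul_eq_pow _ _ _
          rw [Finset.sum_congr rfl fun ν _ => hsplit ν, ← Finset.sum_mul]
          congr 1
          have hGk : ∀ k : Fin 6, G p N (Bl α (D s t k))
              = ∑ j : Fin (N + 1), (ZMod.stdAddChar (Bl α (D s t k))) ^ (j : ℕ) := by
            intro k; rw [G, ← Fin.sum_univ_eq_sum_range]
          rw [Finset.prod_congr rfl fun k _ => hGk k, Finset.prod_univ_sum]
          rw [Fintype.piFinset_univ]
  -- split off the α = 0 term
  set f : ZMod p × ZMod p → ℂ :=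
    fun α => (∏ k : Fin 6, G p N (Bl α (D s t k))) * ZMod.stdAddChar (-(Bl α z)) with hf
  have hsplit : ∑ α : ZMod p × ZMod p, f α
      = (∑ α ∈ (Finset.univ : Finset (ZMod p × ZMod p)) \ {(0, 0)}, f α) + f (0, 0) := by
    rw [Finset.sum_eq_sum_sdiff_singleton_add (Finset.mem_univ ((0, 0) : ZMod p × ZMod p))]
  have hB0 : ∀ v : ZMod p × ZMod p, Bl ((0, 0) : ZMod p × ZMod p) v = 0 := by
    intro v; simp [Bl]
  have h0 : f (0, 0) = ((N : ℂ) + 1) ^ 6 := by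
    rw [hf]
    simp only [hB0, G_zero, neg_zero, AddChar.map_zero_eq_one, mul_one,
      Finset.prod_const, Finset.card_univ, Fintype.card_fin]
  -- bound on each error term
  have hterm : ∀ α ∈ (Finset.univ : Finset (ZMod p × ZMod p)) \ {(0, 0)},
      ‖f α‖ ≤ ((N : ℝ) + 1) ^ 3
        * (Zf p N α.1 * Zf p N α.2 * Zf p N (α.1 * s + α.2 * t)) := by
    intro α _
    rw [hf, norm_mul, abs_eta, mul_one, norm_prod, Fin.prod_univ_six]
    have e0 : Bl α (D s t 0) = -α.1 := by simp [Bl, D]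
    have e1 : Bl α (D s t 1) = -α.2 := by simp [Bl, D]
    have e2 : Bl α (D s t 2) = -(α.1 * s + α.2 * t) := by simp [Bl, D]; ring
    rw [e0, e1, e2]
    have b0 := abs_G_neg_le_Zf (p := p) N α.1
    have b1 := abs_G_neg_le_Zf (p := p) N α.2
    have b2 := abs_G_neg_le_Zf (p := p) N (α.1 * s + α.2 * t)
    have b3 := abs_G_le (p := p) N (Bl α (D s t 3))
    have b4 := abs_G_le (p := p) N (Bl α (D s t 4))
    have b5 := abs_G_le (p := p) N (Bl α (D s t 5))
    calc ‖G p N (-α.1)‖ * ‖G p N (-α.2)‖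
          * ‖G p N (-(α.1 * s + α.2 * t))‖
          * ‖G p N (Bl α (D s t 3))‖ * ‖G p N (Bl α (D s t 4))‖
          * ‖G p N (Bl α (D s t 5))‖
        ≤ Zf p N α.1 * Zf p N α.2 * Zf p N (α.1 * s + α.2 * t)
          * ((N : ℝ) + 1) * ((N : ℝ) + 1) * ((N : ℝ) + 1) := by
          gcongr <;> first
            | assumption
            | exact norm_nonneg _
            | exact Zf_nonneg N _
            | ((repeat' apply mul_nonneg) <;> first
                | exact Zf_nonneg N _
                | positivity)
      _ = ((N : ℝ) + 1) ^ 3 * (Zf p N α.1 * Zf p N α.2 * Zf p N (α.1 * s + α.2 * t)) := by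
          ring
  -- total error bound
  have hE : ‖∑ α ∈ (Finset.univ : Finset (ZMod p × ZMod p)) \ {(0, 0)}, f α‖
      ≤ ((N : ℝ) + 1) ^ 6 / 2 := by
    refine le_trans (norm_sum_le _ _) ?_
    refine le_trans (Finset.sum_le_sum hterm) ?_
    rw [← Finset.mul_sum]
    calc ((N : ℝ) + 1) ^ 3 * ∑ α ∈ (Finset.univ : Finset (ZMod p × ZMod p)) \ {(0, 0)},
          Zf p N α.1 * Zf p N α.2 * Zf p N (α.1 * s + α.2 * t)
        ≤ ((N : ℝ) + 1) ^ 3 * (((N : ℝ) + 1) ^ 3 / 2) := by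
          refine mul_le_mul_of_nonneg_left hexp (by positivity)
      _ = ((N : ℝ) + 1) ^ 6 / 2 := by ring
  -- conclude positivity of the count
  set cnt : ℕ := (Finset.univ.filter (fun ν : Fin 6 → Fin (N + 1) => F ν = z)).card with hcnt
  have hre : ((cnt : ℝ) * (p : ℝ) ^ 2)
      = ((N : ℝ) + 1) ^ 6
        + (∑ α ∈ (Finset.univ : Finset (ZMod p × ZMod p)) \ {(0, 0)}, f α).re := by
    have h1 : ((cnt : ℂ) * (p : ℂ) ^ 2).re
        = ((∑ α ∈ (Finset.univ : Finset (ZMod p × ZMod p)) \ {(0, 0)}, f α)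
            + ((N : ℂ) + 1) ^ 6).re := by
      rw [hA, hsplit, h0]
    have h2 : ((N : ℂ) + 1) ^ 6 = (((((N : ℝ) + 1) ^ 6 : ℝ)) : ℂ) := by push_cast; ring
    have h3 : (cnt : ℂ) * (p : ℂ) ^ 2 = ((((cnt : ℝ) * (p : ℝ) ^ 2 : ℝ)) : ℂ) := by push_cast; ring
    rw [h3, h2, Complex.add_re, Complex.ofReal_re, Complex.ofReal_re] at h1
    rw [h1]; ring
  have hlow : -(((N : ℝ) + 1) ^ 6 / 2)
      ≤ (∑ α ∈ (Finset.univ : Finset (ZMod p × ZMod p)) \ {(0, 0)}, f α).re := by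
    exact (abs_le.mp ((Complex.abs_re_le_norm _).trans hE)).1
  have hpos : (0 : ℝ) < (cnt : ℝ) * (p : ℝ) ^ 2 := by
    rw [hre]
    have hp6 : (0 : ℝ) < ((N : ℝ) + 1) ^ 6 := by positivity
    linarith [hlow, hp6]
  have hcnt0 : 0 < cnt := by
    by_contra h
    push_neg at h
    interval_cases cnt
    · simp at hpos
  obtain ⟨ν, hν⟩ := Finset.card_pos.mp hcnt0
  exact ⟨ν, (Finset.mem_filter.mp hν).2⟩

end Stmt15Aux

set_option maxHeartbeats 1600000 in
/-- under the stated exponential sum bound, every element of (Z/pZ)²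
can be written as Σ_{i<j} ν_{ij}(x_i - x_j) with 0 ≤ ν_{ij} ≤ N, where
x₁ = (0,0), x₂ = (1,0), x₃ = (0,1), x₄ = (s,t). -/
theorem stmt15 (p : ℕ) [hp : Fact (Nat.Prime p)] (δ : ℝ) (hδ : 0 < δ)
    (s t : ZMod p) (A : Multiset (ZMod p × ZMod p))
    (hA1 : ⌊δ * p⌋₊ ≤ A.count ((0 : ZMod p), (0 : ZMod p)))
    (hA2 : ⌊δ * p⌋₊ ≤ A.count ((1 : ZMod p), (0 : ZMod p)))
    (hA3 : ⌊δ * p⌋₊ ≤ A.count ((0 : ZMod p), (1 : ZMod p)))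
    (hA4 : ⌊δ * p⌋₊ ≤ A.count (s, t))
    (N : ℕ) (hN1 : 1 ≤ N) (hN2 : (N : ℝ) ≤ δ * p / 3)
    (hexp : (∑ α ∈ (Finset.univ : Finset (ZMod p × ZMod p)) \ {(0, 0)},
        Zf p N α.1 * Zf p N α.2 * Zf p N (α.1 * s + α.2 * t)) ≤ ((N : ℝ) + 1) ^ 3 / 2)
    (X : Fin 4 → ZMod p × ZMod p)
    (hX : X = ![((0 : ZMod p), (0 : ZMod p)), (1, 0), (0, 1), (s, t)]) :
    ∀ z : ZMod p × ZMod p, ∃ ν : Fin 4 → Fin 4 → ℕ,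
      (∀ i j : Fin 4, ν i j ≤ N) ∧
      z = ∑ i : Fin 4, ∑ j : Fin 4, if i < j then ν i j • (X i - X j) else 0 := by
  intro z
  obtain ⟨ν', hν⟩ := Stmt15Aux.key p N s t hexp z
  refine ⟨![![0, (ν' 0 : ℕ), (ν' 1 : ℕ), (ν' 2 : ℕ)],
            ![0, 0, (ν' 3 : ℕ), (ν' 4 : ℕ)],
            ![0, 0, 0, (ν' 5 : ℕ)],
            ![0, 0, 0, 0]], ?_, ?_⟩
  · intro i j
    fin_cases i <;> fin_cases j <;>
      simp only [Matrix.cons_val_zero, Matrix.cons_val_one, Matrix.head_cons,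
        Matrix.cons_val_two, Matrix.tail_cons, Matrix.cons_val_three] <;>
      first
        | exact Nat.zero_le _
        | exact Fin.is_le _
  · rw [← hν]
    subst hX
    have hD0 : Stmt15Aux.D s t 0 = (-1, 0) := rfl
    have hD1 : Stmt15Aux.D s t 1 = (0, -1) := rfl
    have hD2 : Stmt15Aux.D s t 2 = (-s, -t) := rfl
    have hD3 : Stmt15Aux.D s t 3 = (1, -1) := rfl
    have hD4 : Stmt15Aux.D s t 4 = (1 - s, -t) := rfl
    have hD5 : Stmt15Aux.D s t 5 = (-s, 1 - t) := rfl
    rw [Fin.sum_univ_six, hD0, hD1, hD2, hD3, hD4, hD5]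
    rw [Fin.sum_univ_four (f := fun i => ∑ j : Fin 4, _)]
    rw [Fin.sum_univ_four, Fin.sum_univ_four, Fin.sum_univ_four, Fin.sum_univ_four]
    norm_num [Prod.mk_sub_mk]
    rw [Prod.ext_iff]
    constructor <;> simp [Prod.fst_add, Prod.snd_add] <;> ring


end
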